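/- Let Λ₁, Λ₂ be self-dual ℤ_p-lattices in a quadratic space V over ℚ_p that are p-neighbours, i.e. [Λ₁ : Λ₁ ∩ Λ₂] = [Λ₂ : Λ₁ ∩ Λ₂] = p. Then there exists a primitive isotropic vector w ∈ Λ₁ (w ∉ pΛ₁, q(w) = 0) such that Λ₂ = (1/p)ℤ_p w + {u ∈ Λ₁ : ⟨u, w⟩ ≡ 0 mod p}. -/

import Mathlib

variable {p : ℕ} [Fact p.Prime]

lemma my_mem_range_iff {x : ℚ_[p]} :
    x ∈ Set.range (algebraMap ℤ_[p] ℚ_[p]) ↔ ‖x‖ ≤ 1 := by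
  constructor
  · rintro ⟨y, rfl⟩
    rw [PadicInt.algebraMap_apply]
    exact y.2
  · intro h
    exact ⟨(⟨x, h⟩ : ℤ_[p]), rfl⟩

lemma my_ann {V : Type*} [AddCommGroup V] [Module ℤ_[p] V]
    {Λ : Submodule ℤ_[p] V} {N : Submodule ℤ_[p] ↥Λ}
    (h : Nat.card (↥Λ ⧸ N) = p) (x : ↥Λ) : (p : ℤ_[p]) • x ∈ N := by
  rw [← Submodule.Quotient.mk_eq_zero]
  have h0 : Nat.card (↥Λ ⧸ N) • (Submodule.Quotient.mk x : ↥Λ ⧸ N) = 0 :=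
    card_nsmul_eq_zero'
  rw [h] at h0
  rw [Submodule.Quotient.mk_smul, Nat.cast_smul_eq_nsmul]
  exact h0

lemma my_decomp {G : Type*} [AddCommGroup G] (hcard : Nat.card G = p)
    {y : G} (hy : y ≠ 0) (x : G) : ∃ n : ℤ, x = n • y := by
  have hp : p.Prime := Fact.out
  have hfin : Finite G := Nat.finite_of_card_ne_zero (by rw [hcard]; exact hp.pos.ne')
  have h1 : addOrderOf y ∣ p := hcard ▸ addOrderOf_dvd_natCard y
  have h2 : addOrderOf y = p := by
    rcases (Nat.Prime.eq_one_or_self_of_dvd hp _ h1) with h | h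
    · exact absurd (AddMonoid.addOrderOf_eq_one_iff.mp h) hy
    · exact h
  have h3 : AddSubgroup.zmultiples y = ⊤ := by
    apply AddSubgroup.eq_top_of_card_eq
    rw [Nat.card_zmultiples, h2, hcard]
  have h4 : x ∈ AddSubgroup.zmultiples y := h3 ▸ AddSubgroup.mem_top x
  obtain ⟨n, hn⟩ := (AddSubgroup.mem_zmultiples_iff).mp h4
  exact ⟨n, hn.symm⟩

/-- If Λ₁, Λ₂ are self-dual ℤ_p-lattices that are p-neighbours, then
there is a primitive isotropic vector w ∈ Λ₁ with
Λ₂ = (1/p)ℤ_p w + {u ∈ Λ₁ : ⟨u, w⟩ ≡ 0 mod p}. -/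
theorem stmt_11 {p : ℕ} [Fact p.Prime] (hodd : p ≠ 2)
    {V : Type*} [AddCommGroup V] [Module ℚ_[p] V] [FiniteDimensional ℚ_[p] V]
    [Module ℤ_[p] V] [IsScalarTower ℤ_[p] ℚ_[p] V]
    (Q : QuadraticForm ℚ_[p] V)
    (hnd : ∀ w : V, (∀ x : V, QuadraticMap.polar (⇑Q) w x = 0) → w = 0)
    (Λ₁ Λ₂ : Submodule ℤ_[p] V) (h1fg : Λ₁.FG) (h2fg : Λ₂.FG)
    (h1full : Submodule.span ℚ_[p] (Λ₁ : Set V) = ⊤)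
    (h2full : Submodule.span ℚ_[p] (Λ₂ : Set V) = ⊤)
    (h1self : (Λ₁ : Set V) = {w : V | ∀ l ∈ Λ₁,
      QuadraticMap.polar (⇑Q) w l ∈ Set.range (algebraMap ℤ_[p] ℚ_[p])})
    (h2self : (Λ₂ : Set V) = {w : V | ∀ l ∈ Λ₂,
      QuadraticMap.polar (⇑Q) w l ∈ Set.range (algebraMap ℤ_[p] ℚ_[p])})
    (hidx1 : Nat.card (↥Λ₁ ⧸ Submodule.comap Λ₁.subtype (Λ₁ ⊓ Λ₂)) = p)
    (hidx2 : Nat.card (↥Λ₂ ⧸ Submodule.comap Λ₂.subtype (Λ₁ ⊓ Λ₂)) = p) :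
    ∃ w ∈ Λ₁, Q w = 0 ∧ (¬ ∃ u ∈ Λ₁, w = (p : ℤ_[p]) • u) ∧
      (Λ₂ : Set V) = {x : V | ∃ (c : ℤ_[p]) (u : V), u ∈ Λ₁ ∧
        (∃ r : ℤ_[p], QuadraticMap.polar (⇑Q) u w = algebraMap ℤ_[p] ℚ_[p] ((p : ℤ_[p]) * r)) ∧
        x = (algebraMap ℤ_[p] ℚ_[p] c / (p : ℚ_[p])) • w + u} := by
  have hp : p.Prime := Fact.out
  have hp0 : (p : ℚ_[p]) ≠ 0 := Nat.cast_ne_zero.mpr hp.pos.ne'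
  -- membership characterizations
  have hmem1 : ∀ v : V, v ∈ Λ₁ ↔ ∀ l ∈ Λ₁,
      QuadraticMap.polar (⇑Q) v l ∈ Set.range (algebraMap ℤ_[p] ℚ_[p]) := by
    intro v
    rw [← SetLike.mem_coe, h1self]
    exact Iff.rfl
  have hmem2 : ∀ v : V, v ∈ Λ₂ ↔ ∀ l ∈ Λ₂,
      QuadraticMap.polar (⇑Q) v l ∈ Set.range (algebraMap ℤ_[p] ℚ_[p]) := by
    intro v
    rw [← SetLike.mem_coe, h2self]
    exact Iff.rfl
  -- p-annihilation
  have hann1 : ∀ v ∈ Λ₁, (p : ℤ_[p]) • v ∈ Λ₁ ⊓ Λ₂ := by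
    intro v hv
    have := my_ann hidx1 ⟨v, hv⟩
    rwa [Submodule.mem_comap] at this
  have hann2 : ∀ v ∈ Λ₂, (p : ℤ_[p]) • v ∈ Λ₁ ⊓ Λ₂ := by
    intro v hv
    have := my_ann hidx2 ⟨v, hv⟩
    rwa [Submodule.mem_comap] at this
  -- a vector in Λ₂ \ Λ₁
  obtain ⟨y, hyΛ2, hyΛ1⟩ : ∃ y ∈ Λ₂, y ∉ Λ₁ := by
    by_contra hcon
    push_neg at hcon
    have htop : Submodule.comap Λ₂.subtype (Λ₁ ⊓ Λ₂) = ⊤ := by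
      ext v
      simp only [Submodule.mem_comap, Submodule.mem_top, iff_true, Submodule.mem_inf]
      exact ⟨hcon v v.2, v.2⟩
    rw [htop] at hidx2
    have : Subsingleton (↥Λ₂ ⧸ (⊤ : Submodule ℤ_[p] ↥Λ₂)) :=
      Submodule.Quotient.subsingleton_iff.mpr rfl
    rw [Nat.card_of_subsingleton (0 : ↥Λ₂ ⧸ (⊤ : Submodule ℤ_[p] ↥Λ₂))] at hidx2
    exact hp.one_lt.ne hidx2
  -- a vector z ∈ Λ₁ with non-integral pairing with y
  obtain ⟨z, hzΛ1, hbz⟩ : ∃ z ∈ Λ₁,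
      QuadraticMap.polar (⇑Q) y z ∉ Set.range (algebraMap ℤ_[p] ℚ_[p]) := by
    by_contra hcon
    push_neg at hcon
    exact hyΛ1 ((hmem1 y).mpr hcon)
  -- scalar conversion helper
  have hsmul : ∀ (a : ℤ_[p]) (v : V), a • v = (a : ℚ_[p]) • v := by
    intro a v
    rw [← PadicInt.algebraMap_apply, algebraMap_smul]
  -- polar with p-scaled argument
  have hpolar_smul : ∀ (a : ℤ_[p]) (v u : V),
      QuadraticMap.polar (⇑Q) u (a • v) = (a : ℚ_[p]) * QuadraticMap.polar (⇑Q) u v := by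
    intro a v u
    rw [hsmul, QuadraticMap.polar_smul_right, smul_eq_mul]
  -- B : the unit p * polar y z
  have hpyz : QuadraticMap.polar (⇑Q) ((p : ℤ_[p]) • y) z
      ∈ Set.range (algebraMap ℤ_[p] ℚ_[p]) :=
    (hmem1 _).mp (hann2 y hyΛ2).1 z hzΛ1
  have hpyz' : QuadraticMap.polar (⇑Q) ((p : ℤ_[p]) • y) z
      = (p : ℚ_[p]) * QuadraticMap.polar (⇑Q) y z := by
    rw [hsmul, QuadraticMap.polar_smul_left, smul_eq_mul, PadicInt.coe_natCast]
  obtain ⟨B, hB⟩ := hpyz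
  rw [hpyz', PadicInt.algebraMap_apply] at hB
  have hBnorm : ‖B‖ = 1 := by
    rcases lt_or_eq_of_le B.norm_le_one with hlt | heq
    · exfalso
      obtain ⟨C, hC⟩ := (PadicInt.norm_lt_one_iff_dvd B).mp hlt
      apply hbz
      refine ⟨C, ?_⟩
      rw [PadicInt.algebraMap_apply]
      apply mul_left_cancel₀ hp0
      rw [← hB, hC]
      push_cast
      ring
    · exact heq
  -- Q y and Q z are integral
  have hnorm2 : ‖(2 : ℚ_[p])‖ = 1 := by
    have h2 : ((2 : ℤ) : ℚ_[p]) = 2 := by push_cast; ring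
    rcases lt_or_eq_of_le (Padic.norm_int_le_one (2 : ℤ) : ‖((2:ℤ) : ℚ_[p])‖ ≤ 1) with hlt | heq
    · exfalso
      rw [Padic.norm_intCast_lt_one_iff] at hlt
      have : p ∣ 2 := Int.ofNat_dvd.mp (by exact_mod_cast hlt)
      exact hodd ((Nat.prime_dvd_prime_iff_eq hp Nat.prime_two).mp this)
    · rw [← h2]; exact heq
  have hQint : ∀ v : V, QuadraticMap.polar (⇑Q) v v ∈ Set.range (algebraMap ℤ_[p] ℚ_[p]) →
      ∃ A : ℤ_[p], (A : ℚ_[p]) = Q v := by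
    intro v hv
    rw [my_mem_range_iff] at hv
    have hps : QuadraticMap.polar (⇑Q) v v = 2 * Q v := by
      rw [QuadraticMap.polar_self]
      rw [two_smul, two_mul]
    rw [hps, norm_mul, hnorm2, one_mul] at hv
    exact ⟨⟨Q v, hv⟩, rfl⟩
  obtain ⟨A, hA⟩ := hQint y ((hmem2 y).mp hyΛ2 y hyΛ2)
  obtain ⟨Cz, hCz⟩ := hQint z ((hmem1 z).mp hzΛ1 z hzΛ1)
  -- Hensel's lemma
  set F : Polynomial ℤ_[p] := Polynomial.C ((p : ℤ_[p]) * A) + Polynomial.C B * Polynomial.X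
      + Polynomial.C ((p : ℤ_[p]) * Cz) * Polynomial.X ^ 2 with hF
  have heval0 : F.eval 0 = (p : ℤ_[p]) * A := by simp [hF]
  have hderiv : F.derivative.eval 0 = B := by
    simp [hF, Polynomial.derivative_pow]
  have hhen : ‖F.eval 0‖ < ‖F.derivative.eval 0‖ ^ 2 := by
    rw [heval0, hderiv, hBnorm, one_pow]
    rw [norm_mul, PadicInt.norm_p]
    refine lt_of_le_of_lt (mul_le_of_le_one_right (by positivity) A.norm_le_one) ?_
    exact inv_lt_one_of_one_lt₀ (by exact_mod_cast hp.one_lt)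
  obtain ⟨t, ht0, htd, -, -⟩ := hensels_lemma hhen
  simp only [Polynomial.coe_aeval_eq_eval] at ht0 htd
  rw [hderiv, hBnorm, sub_zero] at htd
  obtain ⟨t₀, ht₀⟩ := (PadicInt.norm_lt_one_iff_dvd t).mp htd
  -- the isotropic vector
  set y' : V := y + t • z with hy'def
  have htz : t • z ∈ Λ₁ ⊓ Λ₂ := by
    have : t • z = t₀ • ((p : ℤ_[p]) • z) := by
      rw [ht₀, ← smul_assoc, smul_eq_mul, mul_comm]
    rw [this]
    exact Submodule.smul_mem _ t₀ (hann1 z hzΛ1)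
  have hy'2 : y' ∈ Λ₂ := Λ₂.add_mem hyΛ2 htz.2
  have hy'1 : y' ∉ Λ₁ := by
    intro h
    apply hyΛ1
    have := Λ₁.sub_mem h htz.1
    simpa [hy'def] using this
  -- Q y' = 0
  have hFt : (p : ℚ_[p]) * (A : ℚ_[p]) + (B : ℚ_[p]) * (t : ℚ_[p])
      + (p : ℚ_[p]) * (Cz : ℚ_[p]) * (t : ℚ_[p]) ^ 2 = 0 := by
    have : ((F.eval t : ℤ_[p]) : ℚ_[p]) = 0 := by rw [ht0]; exact PadicInt.coe_zero
    rw [hF] at this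
    simpa using this
  have hQy' : Q y' = 0 := by
    have hmap : Q y' = Q y + Q (t • z) + QuadraticMap.polar (⇑Q) y (t • z) :=
      QuadraticMap.map_add (⇑Q) y (t • z)
    have h1 : Q (t • z) = (t : ℚ_[p]) ^ 2 * Q z := by
      rw [hsmul, QuadraticMap.map_smul, smul_eq_mul, sq]
    have h2 : QuadraticMap.polar (⇑Q) y (t • z) = (t : ℚ_[p]) * QuadraticMap.polar (⇑Q) y z :=
      hpolar_smul t z y
    have h3 : QuadraticMap.polar (⇑Q) y z = (B : ℚ_[p]) / p := by
      field_simp [hB]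
      rw [hB, mul_comm]
    rw [hmap, h1, h2, h3, ← hA, ← hCz]
    field_simp
    linear_combination hFt
  -- the vector w
  refine ⟨(p : ℤ_[p]) • y', (hann2 y' hy'2).1, ?_, ?_, ?_⟩
  · rw [hsmul, QuadraticMap.map_smul, hQy']
    simp
  · rintro ⟨u, huΛ1, hu⟩
    apply hy'1
    have h' : ((p : ℤ_[p]) : ℚ_[p]) • y' = ((p : ℤ_[p]) : ℚ_[p]) • u := by
      rw [← hsmul, ← hsmul]; exact hu
    have hpz : ((p : ℤ_[p]) : ℚ_[p]) ≠ 0 := by rw [PadicInt.coe_natCast]; exact hp0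
    have hyu : y' = u := smul_right_injective V hpz h'
    rw [hyu]
    exact huΛ1
  · -- the set equality
    set N₂ := Submodule.comap Λ₂.subtype (Λ₁ ⊓ Λ₂) with hN₂
    have hdec : ∀ v ∈ Λ₂, ∃ n : ℤ, v - n • y' ∈ Λ₁ ⊓ Λ₂ := by
      intro v hv
      have hy'ne : N₂.mkQ ⟨y', hy'2⟩ ≠ 0 := by
        rw [Ne, Submodule.mkQ_apply, Submodule.Quotient.mk_eq_zero, hN₂, Submodule.mem_comap]
        intro h
        exact hy'1 h.1
      obtain ⟨n, hn⟩ := my_decomp hidx2 hy'ne (N₂.mkQ ⟨v, hv⟩)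
      have h0 : N₂.mkQ ((⟨v, hv⟩ : ↥Λ₂) - n • (⟨y', hy'2⟩ : ↥Λ₂)) = 0 := by
        rw [map_sub, map_zsmul, ← hn, sub_self]
      rw [Submodule.mkQ_apply, Submodule.Quotient.mk_eq_zero, hN₂, Submodule.mem_comap] at h0
      refine ⟨n, ?_⟩
      simpa using h0
    have hpolarw : ∀ u : V, QuadraticMap.polar (⇑Q) u ((p : ℤ_[p]) • y')
        = (p : ℚ_[p]) * QuadraticMap.polar (⇑Q) u y' := by
      intro u
      rw [hpolar_smul, PadicInt.coe_natCast]
    ext x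
    simp only [SetLike.mem_coe, Set.mem_setOf_eq]
    constructor
    · intro hx
      obtain ⟨n, hnm⟩ := hdec x hx
      refine ⟨(n : ℤ_[p]), x - n • y', hnm.1, ?_, ?_⟩
      · obtain ⟨r, hr⟩ := (hmem2 _).mp hnm.2 y' hy'2
        refine ⟨r, ?_⟩
        rw [hpolarw, ← hr, map_mul, map_natCast]
      · rw [hsmul (p : ℤ_[p]) y', PadicInt.coe_natCast, smul_smul, div_mul_cancel₀ _ hp0,
          PadicInt.algebraMap_apply, PadicInt.coe_intCast, Int.cast_smul_eq_zsmul]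
        abel
    · rintro ⟨c, u, huΛ1, ⟨r, hr⟩, rfl⟩
      have hru : QuadraticMap.polar (⇑Q) u y' = algebraMap ℤ_[p] ℚ_[p] r := by
        rw [hpolarw, map_mul, map_natCast] at hr
        exact mul_left_cancel₀ hp0 hr
      have huΛ2 : u ∈ Λ₂ := by
        rw [hmem2]
        intro l hl
        obtain ⟨n, hnm⟩ := hdec l hl
        obtain ⟨s, hs⟩ := (hmem1 u).mp huΛ1 _ hnm.1
        refine ⟨s + (n : ℤ_[p]) * r, ?_⟩
        have h2 : QuadraticMap.polar (⇑Q) u (n • y') = (n : ℚ_[p]) * QuadraticMap.polar (⇑Q) u y' := by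
          rw [← Int.cast_smul_eq_zsmul ℚ_[p], QuadraticMap.polar_smul_right, smul_eq_mul]
        have h3 : QuadraticMap.polar (⇑Q) u (l - n • y')
            = QuadraticMap.polar (⇑Q) u l - QuadraticMap.polar (⇑Q) u (n • y') :=
          QuadraticMap.polar_sub_right _ _ _ _
        rw [map_add, map_mul, map_intCast, ← hru, ← h2, hs, h3]
        ring
      have hterm : (algebraMap ℤ_[p] ℚ_[p] c / (p : ℚ_[p])) • ((p : ℤ_[p]) • y') = c • y' := by
        rw [hsmul (p : ℤ_[p]) y', PadicInt.coe_natCast, smul_smul, div_mul_cancel₀ _ hp0,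
          PadicInt.algebraMap_apply, ← hsmul]
      rw [hterm]
      exact Λ₂.add_mem (Λ₂.smul_mem c hy'2) huΛ2
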